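/- arXiv:0903.4226 — 8 statements merged into one kernel-verified Lean document; each statement's English description precedes it below -/
import Mathlib

section
/- Let a_n^{(k)} denote the n-th Mahler coefficient of the k-fold iterate S^k of the p-adic shift. Then a_{p^k}^{(k)} = 1. -/
variable {p : ℕ} [hp : Fact p.Prime]

lemma padicShift_exists (x : ℤ_[p]) :
    ∃ y : ℤ_[p], x = ((PadicInt.toZMod x).val : ℤ_[p]) + p * y := by
  have h := PadicInt.toZMod_spec x
  rw [PadicInt.maximalIdeal_eq_span_p, Ideal.mem_span_singleton] at h
  obtain ⟨y, hy⟩ := h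
  refine ⟨y, ?_⟩
  rw [← ZMod.natCast_val] at hy
  linear_combination hy

/-- The `p`-adic shift, deleting the first digit of the `p`-adic expansion. -/
noncomputable def padicShift (x : ℤ_[p]) : ℤ_[p] :=
  Classical.choose (padicShift_exists x)

/-- The `n`-th Mahler coefficient of the `k`-fold iterate of the `p`-adic shift. -/
noncomputable def mahlerCoeffShift (k n : ℕ) : ℤ_[p] :=
  ∑ i ∈ Finset.range (n + 1),
    (-1 : ℤ_[p]) ^ (n + i) * padicShift^[k] ((i : ℤ_[p])) * (n.choose i : ℤ_[p])

lemma padicShift_natCast (n : ℕ) :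
    padicShift (p := p) (n : ℤ_[p]) = ((n / p : ℕ) : ℤ_[p]) := by
  have hspec := Classical.choose_spec (padicShift_exists (p := p) (n : ℤ_[p]))
  have hval : (PadicInt.toZMod ((n : ℤ_[p]))).val = n % p := by
    rw [map_natCast]
    exact ZMod.val_natCast p n
  have hp0 : (p : ℤ_[p]) ≠ 0 :=
    Nat.cast_ne_zero.mpr hp.out.ne_zero
  have hdiv : (n : ℤ_[p]) = ((n % p : ℕ) : ℤ_[p]) + p * ((n / p : ℕ) : ℤ_[p]) := by
    exact_mod_cast congrArg (Nat.cast : ℕ → ℤ_[p]) (Nat.mod_add_div n p).symm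
  have hspec' : (n : ℤ_[p]) = ((n % p : ℕ) : ℤ_[p]) + p * padicShift ((n : ℤ_[p])) := by
    rw [← hval]; exact hspec
  apply mul_left_cancel₀ hp0
  linear_combination hdiv - hspec'

lemma padicShift_iterate_natCast (k n : ℕ) :
    padicShift^[k] ((n : ℤ_[p])) = ((n / p ^ k : ℕ) : ℤ_[p]) := by
  induction k generalizing n with
  | zero => simp
  | succ k ih =>
    rw [Function.iterate_succ_apply, padicShift_natCast, ih,
      Nat.div_div_eq_div_mul, pow_succ, mul_comm]

/-- `a_{p^k}^{(k)} = 1`. -/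
theorem mahlerCoeffShift_pow_eq_one (k : ℕ) :
    mahlerCoeffShift (p := p) k (p ^ k) = 1 := by
  unfold mahlerCoeffShift
  rw [Finset.sum_range_succ]
  have h0 : ∀ i ∈ Finset.range (p ^ k),
      (-1 : ℤ_[p]) ^ (p ^ k + i) * padicShift^[k] ((i : ℤ_[p])) *
        ((p ^ k).choose i : ℤ_[p]) = 0 := by
    intro i hi
    rw [padicShift_iterate_natCast, Nat.div_eq_of_lt (Finset.mem_range.mp hi)]
    simp
  rw [Finset.sum_eq_zero h0, padicShift_iterate_natCast,
    Nat.div_self (pow_pos hp.out.pos k)]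
  simp [← two_mul, pow_mul]
end

section
/- Let a_n^{(k)} denote the n-th Mahler coefficient of S^k. For every j ≥ 0 and every n > j·p^k - j + 1, the coefficient a_n^{(k)} is divisible by p^j; in particular |a_n^{(k)}| ≤ p^{-j}. -/
variable {p : ℕ} [hp : Fact p.Prime]

lemma padicShift_spec (x : ℤ_[p]) :
    x = ((PadicInt.toZMod x).val : ℤ_[p]) + p * padicShift x :=
  Classical.choose_spec (padicShift_exists x)

lemma padicShift_add_p_mul (x t : ℤ_[p]) :
    padicShift (x + (p : ℤ_[p]) * t) = padicShift x + t := by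
  have hd : PadicInt.toZMod (x + (p : ℤ_[p]) * t) = PadicInt.toZMod x := by
    rw [map_add, map_mul]
    simp
  have h1 := padicShift_spec (x + (p : ℤ_[p]) * t)
  have h2 := padicShift_spec x
  rw [hd] at h1
  have hp0 : (p : ℤ_[p]) ≠ 0 := by
    exact_mod_cast Nat.cast_ne_zero.mpr hp.out.ne_zero
  have : (p : ℤ_[p]) * padicShift (x + (p : ℤ_[p]) * t) = p * (padicShift x + t) := by
    linear_combination h2 - h1
  exact mul_left_cancel₀ hp0 this

lemma padicShift_iterate_add (k : ℕ) (x t : ℤ_[p]) :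
    padicShift^[k] (x + (p : ℤ_[p]) ^ k * t) = padicShift^[k] x + t := by
  induction k generalizing x with
  | zero => simp
  | succ k ih =>
    rw [Function.iterate_succ_apply, Function.iterate_succ_apply]
    have : x + (p : ℤ_[p]) ^ (k + 1) * t = x + p * (p ^ k * t) := by ring
    rw [this, padicShift_add_p_mul]
    exact ih (padicShift x)

open Finset in
lemma fS_add_pow (k m : ℕ) :
    padicShift^[k] (((m + p ^ k : ℕ) : ℤ_[p])) = padicShift^[k] ((m : ℤ_[p])) + 1 := by
  push_cast
  rw [show ((m : ℤ_[p]) + (p : ℤ_[p]) ^ k) = (m : ℤ_[p]) + (p : ℤ_[p]) ^ k * 1 by ring,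
    padicShift_iterate_add]

lemma fwdDiff_iter_zero_fun (n : ℕ) :
    (fwdDiff (1 : ℕ))^[n] (fun _ ↦ (0 : ℤ_[p])) = fun _ ↦ 0 := by
  induction n with
  | zero => rfl
  | succ n ih => rw [Function.iterate_succ_apply, fwdDiff_const, ih]

open Finset in
lemma mahlerCoeffShift_eq_fwdDiff (k n : ℕ) :
    mahlerCoeffShift (p := p) k n
      = (fwdDiff (1 : ℕ))^[n] (fun m : ℕ ↦ padicShift^[k] ((m : ℤ_[p]))) 0 := by
  rw [fwdDiff_iter_eq_sum_shift, mahlerCoeffShift]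
  refine Finset.sum_congr rfl fun i hi ↦ ?_
  rw [Finset.mem_range] at hi
  have hin : i ≤ n := by omega
  have hsign : (-1 : ℤ_[p]) ^ (n + i) = (-1 : ℤ_[p]) ^ (n - i) := by
    rw [show n + i = (n - i) + 2 * i by omega, pow_add, pow_mul, neg_one_sq, one_pow, mul_one]
  rw [zsmul_eq_mul]
  push_cast
  rw [hsign]
  simp [mul_comm, mul_assoc, mul_left_comm]

open Finset in
lemma key_recurrence (k m : ℕ) (hm : 1 ≤ m) :
    ∑ i ∈ range (p ^ k),
      (p ^ k).choose (i + 1) • (fwdDiff (1 : ℕ))^[m + (i + 1)]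
        (fun m : ℕ ↦ padicShift^[k] ((m : ℤ_[p]))) 0 = 0 := by
  set f : ℕ → ℤ_[p] := fun m ↦ padicShift^[k] ((m : ℤ_[p])) with hf
  have h1 : (∑ i ∈ range (p ^ k + 1), (p ^ k).choose i • ((fwdDiff (1 : ℕ))^[i] f))
      = f + fun _ ↦ (1 : ℤ_[p]) := by
    funext y
    have := shift_eq_sum_fwdDiff_iter (1 : ℕ) f (p ^ k) y
    have hy : f (y + p ^ k • 1) = f y + 1 := by
      rw [smul_eq_mul, mul_one]
      exact fS_add_pow k y
    rw [hy] at this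
    simpa [Finset.sum_apply] using this.symm
  obtain ⟨m', rfl⟩ : ∃ m', m = m' + 1 := ⟨m - 1, by omega⟩
  have h2 := congrArg (fun g ↦ (fwdDiff (1 : ℕ))^[m' + 1] g 0) h1
  rw [fwdDiff_iter_finset_sum] at h2
  simp only [fwdDiff_iter_const_smul] at h2
  have h3 : (fwdDiff (1 : ℕ))^[m' + 1] (f + fun _ ↦ (1 : ℤ_[p]))
      = (fwdDiff (1 : ℕ))^[m' + 1] f := by
    rw [fwdDiff_iter_add]
    have hz : (fwdDiff (1 : ℕ))^[m' + 1] (fun _ ↦ (1 : ℤ_[p])) = fun _ ↦ 0 := by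
      rw [Function.iterate_succ_apply, fwdDiff_const, fwdDiff_iter_zero_fun]
    rw [hz]
    funext y
    simp
  rw [h3] at h2
  simp only [Finset.sum_apply, Pi.smul_apply] at h2
  have h4 : ∀ i, (p ^ k).choose i • (fwdDiff (1 : ℕ))^[m' + 1] ((fwdDiff (1 : ℕ))^[i] f) 0
      = (p ^ k).choose i • (fwdDiff (1 : ℕ))^[(m' + 1) + i] f 0 := by
    intro i
    exact congrArg (fun z ↦ (p ^ k).choose i • z)
      (congrFun (Function.iterate_add_apply (fwdDiff (1 : ℕ)) (m' + 1) i f) 0).symm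
  have h5 : ∑ i ∈ range (p ^ k + 1),
      (p ^ k).choose i • (fwdDiff (1 : ℕ))^[(m' + 1) + i] f 0
      = (fwdDiff (1 : ℕ))^[m' + 1] f 0 := by
    rw [← h2]
    exact Finset.sum_congr rfl fun i _ ↦ (h4 i).symm
  have h6 := Finset.sum_range_succ'
    (fun i ↦ (p ^ k).choose i • (fwdDiff (1 : ℕ))^[(m' + 1) + i] f 0) (p ^ k)
  rw [h5] at h6
  simp only [Nat.choose_zero_right, one_smul, Nat.add_zero] at h6
  linear_combination h6.symm

open Finset in
lemma aux_dvd (k : ℕ) : ∀ j n, j * (p ^ k - 1) + 2 ≤ n →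
    (p : ℤ_[p]) ^ j ∣ mahlerCoeffShift (p := p) k n := by
  intro j
  induction j with
  | zero => intro n _; simp
  | succ j ih =>
    intro n hn
    have hNpos : 1 ≤ p ^ k := Nat.one_le_pow _ _ hp.out.pos
    have hC : (j + 1) * (p ^ k - 1) = j * (p ^ k - 1) + (p ^ k - 1) := Nat.succ_mul _ _
    obtain ⟨N', hN'⟩ : ∃ N', p ^ k = N' + 1 := ⟨p ^ k - 1, by omega⟩
    set f : ℕ → ℤ_[p] := fun m ↦ padicShift^[k] ((m : ℤ_[p])) with hf
    set m := n - p ^ k with hm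
    have hmn : n = m + p ^ k := by omega
    have hm1 : 1 ≤ m := by omega
    have hkey := key_recurrence (p := p) k m hm1
    rw [hN', Finset.sum_range_succ] at hkey
    rw [← hN', Nat.choose_self, one_smul, ← hmn] at hkey
    have hEq : mahlerCoeffShift (p := p) k n
        = -∑ i ∈ range N', (p ^ k).choose (i + 1) • (fwdDiff (1 : ℕ))^[m + (i + 1)] f 0 := by
      rw [mahlerCoeffShift_eq_fwdDiff]
      linear_combination hkey
    rw [hEq]
    refine dvd_neg.mpr (Finset.dvd_sum fun i hi ↦ ?_)
    rw [Finset.mem_range] at hi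
    have hdvd1 : (p : ℤ_[p]) ∣ ((p ^ k).choose (i + 1) : ℤ_[p]) := by
      exact_mod_cast Nat.cast_dvd_cast
        (hp.out.dvd_choose_pow (by omega) (by omega))
    have hdvd2 : (p : ℤ_[p]) ^ j ∣ (fwdDiff (1 : ℕ))^[m + (i + 1)] f 0 := by
      have := ih (m + (i + 1)) (by omega)
      rwa [mahlerCoeffShift_eq_fwdDiff] at this
    rw [nsmul_eq_mul, pow_succ, mul_comm ((p : ℤ_[p]) ^ j) _]
    exact mul_dvd_mul hdvd1 hdvd2

/-- `p^j` divides `a_n^{(k)}` for `n > j p^k - j + 1`; in particular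
`|a_n^{(k)}| ≤ p^{-j}`. -/
theorem pow_dvd_mahlerCoeffShift (k j n : ℕ) (hn : j * p ^ k - j + 1 < n) :
    (p : ℤ_[p]) ^ j ∣ mahlerCoeffShift (p := p) k n ∧
    ‖mahlerCoeffShift (p := p) k n‖ ≤ (p : ℝ) ^ (-(j : ℤ)) := by
  have hNpos : 1 ≤ p ^ k := Nat.one_le_pow _ _ hp.out.pos
  have hsub : j * (p ^ k - 1) = j * p ^ k - j := by
    rw [Nat.mul_sub, mul_one]
  have hdvd : (p : ℤ_[p]) ^ j ∣ mahlerCoeffShift (p := p) k n :=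
    aux_dvd k j n (by omega)
  refine ⟨hdvd, ?_⟩
  rw [PadicInt.norm_le_pow_iff_mem_span_pow]
  exact Ideal.mem_span_singleton.mpr hdvd
end

section
/- Let T: Z_p → Z_p be (r, C) locally scaling. Then for any r' ≤ r and any x ∈ Z_p, the restriction of T to the closed ball B(x, r') is a bijection onto the closed ball B(T(x), C·r'). -/
open Metric Set

private lemma locallyScaling_improve {p : ℕ} [hp : Fact p.Prime]
    (a m b : ℕ) (hba : a ≤ b) (T : ℤ_[p] → ℤ_[p])
    (hT : ∀ x y : ℤ_[p], ‖x - y‖ ≤ (p : ℝ) ^ (-(a : ℤ)) →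
      ‖T x - T y‖ = (p : ℝ) ^ (m : ℕ) * ‖x - y‖)
    (x z y : ℤ_[p]) (hy : y ∈ closedBall x ((p : ℝ) ^ (-(b : ℤ))))
    (hz : ‖z - T y‖ ≤ (p : ℝ) ^ (m : ℕ) * (p : ℝ) ^ (-(b : ℤ)))
    (hne : z ≠ T y) :
    ∃ y' ∈ closedBall x ((p : ℝ) ^ (-(b : ℤ))), ‖z - T y'‖ < ‖z - T y‖ := by
  have hp1 : (1 : ℝ) < p := by exact_mod_cast hp.out.one_lt
  have hp0 : (0 : ℝ) < p := lt_trans one_pos hp1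
  have h0 : z - T y ≠ 0 := sub_ne_zero.mpr hne
  set sN : ℕ := (z - T y).valuation with hsN
  have hval : ((sN : ℤ)) = (z - T y).valuation :=
    rfl
  have hnorm : ‖z - T y‖ = (p : ℝ) ^ (-(sN : ℤ)) := by
    rw [PadicInt.norm_eq_zpow_neg_valuation h0, hval]
  -- b ≤ m + sN
  have hmb : (p : ℝ) ^ (m : ℕ) * (p : ℝ) ^ (-(b : ℤ)) = (p : ℝ) ^ ((m : ℤ) - b) := by
    rw [← zpow_natCast (p : ℝ) m, ← zpow_add₀ (ne_of_gt hp0)]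
    ring_nf
  have hbt : b ≤ m + sN := by
    have : (p : ℝ) ^ (-(sN : ℤ)) ≤ (p : ℝ) ^ ((m : ℤ) - b) := by
      rw [← hnorm, ← hmb]; exact hz
    have := (zpow_le_zpow_iff_right₀ hp1).mp this
    omega
  set t : ℕ := m + sN with ht
  have hta : a ≤ t := le_trans hba hbt
  -- the p test points
  set yi : ZMod p → ℤ_[p] := fun i => y + (i.val : ℤ_[p]) * (p : ℤ_[p]) ^ t with hyi
  have hyiy : ∀ i : ZMod p, ‖yi i - y‖ ≤ (p : ℝ) ^ (-(t : ℤ)) := by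
    intro i
    have : yi i - y = (i.val : ℤ_[p]) * (p : ℤ_[p]) ^ t := by simp [hyi]
    rw [this, norm_mul, PadicInt.norm_p_pow]
    exact mul_le_of_le_one_left (by positivity) (PadicInt.norm_le_one _)
  have hpowle : ∀ {u v : ℕ}, u ≤ v → (p : ℝ) ^ (-(v : ℤ)) ≤ (p : ℝ) ^ (-(u : ℤ)) := by
    intro u v huv
    exact zpow_le_zpow_right₀ (le_of_lt hp1) (by omega)
  have hyia : ∀ i : ZMod p, ‖yi i - y‖ ≤ (p : ℝ) ^ (-(a : ℤ)) :=
    fun i => le_trans (hyiy i) (hpowle hta)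
  have hyiball : ∀ i : ZMod p, yi i ∈ closedBall x ((p : ℝ) ^ (-(b : ℤ))) := by
    intro i
    rw [mem_closedBall, dist_eq_norm]
    have : yi i - x = (yi i - y) + (y - x) := by ring
    rw [this]
    refine le_trans (PadicInt.nonarchimedean _ _) (max_le ?_ ?_)
    · exact le_trans (hyiy i) (hpowle hbt)
    · rw [mem_closedBall, dist_eq_norm] at hy; exact hy
  -- distances between test images
  have hdij : ∀ i j : ZMod p, i ≠ j → ‖yi i - yi j‖ = (p : ℝ) ^ (-(t : ℤ)) := by
    intro i j hij
    have heq : yi i - yi j = (((i.val : ℤ) - (j.val : ℤ) : ℤ) : ℤ_[p]) * (p : ℤ_[p]) ^ t := by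
      simp [hyi]; ring
    rw [heq, norm_mul, PadicInt.norm_p_pow]
    have hone : ‖(((i.val : ℤ) - (j.val : ℤ) : ℤ) : ℤ_[p])‖ = 1 := by
      rcases lt_or_eq_of_le (PadicInt.norm_le_one (((i.val : ℤ) - (j.val : ℤ) : ℤ) : ℤ_[p])) with h | h
      · exfalso
        have hd : (p : ℤ) ∣ (i.val : ℤ) - (j.val : ℤ) :=
          (PadicInt.norm_int_lt_one_iff_dvd _).mp h
        have habs : |(i.val : ℤ) - (j.val : ℤ)| < p := by
          have h1 := ZMod.val_lt i
          have h2 := ZMod.val_lt j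
          rw [abs_lt]; constructor <;> [push_cast; push_cast] <;> omega
        have := Int.eq_zero_of_abs_lt_dvd hd habs
        have : i.val = j.val := by omega
        exact hij (ZMod.val_injective _ this)
      · exact h
    rw [hone, one_mul]
  have hTij : ∀ i j : ZMod p, i ≠ j → ‖T (yi i) - T (yi j)‖ = (p : ℝ) ^ (-(sN : ℤ)) := by
    intro i j hij
    have hd : ‖yi i - yi j‖ ≤ (p : ℝ) ^ (-(a : ℤ)) := by
      rw [hdij i j hij]; exact hpowle hta
    rw [hT _ _ hd, hdij i j hij, ← zpow_natCast (p : ℝ) m, ← zpow_add₀ (ne_of_gt hp0)]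
    congr 1; omega
  -- divisibility by p^sN
  have hdvd : ∀ i : ZMod p, (p : ℤ_[p]) ^ sN ∣ (T (yi i) - T y) := by
    intro i
    rw [← Ideal.mem_span_singleton, ← PadicInt.norm_le_pow_iff_mem_span_pow]
    rw [hT _ _ (hyia i)]
    calc (p : ℝ) ^ (m : ℕ) * ‖yi i - y‖ ≤ (p : ℝ) ^ (m : ℕ) * (p : ℝ) ^ (-(t : ℤ)) := by
          exact mul_le_mul_of_nonneg_left (hyiy i) (by positivity)
      _ = (p : ℝ) ^ (-(sN : ℤ)) := by
          rw [← zpow_natCast (p : ℝ) m, ← zpow_add₀ (ne_of_gt hp0)]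
          congr 1; omega
  choose v hv using hdvd
  obtain ⟨w, hw⟩ : (p : ℤ_[p]) ^ sN ∣ (z - T y) := by
    rw [← Ideal.mem_span_singleton, ← PadicInt.norm_le_pow_iff_mem_span_pow, hnorm]
  -- small norm from toZMod equality
  have hsmall : ∀ u : ℤ_[p], PadicInt.toZMod u = 0 → ‖u‖ ≤ (p : ℝ) ^ (-(1 : ℕ) : ℤ) := by
    intro u hu
    have : u ∈ RingHom.ker (PadicInt.toZMod : ℤ_[p] →+* ZMod p) := hu
    rw [PadicInt.ker_toZMod, PadicInt.maximalIdeal_eq_span_p, Ideal.mem_span_singleton] at this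
    have := (PadicInt.norm_lt_one_iff_dvd u).mpr this
    have h1 : ‖u‖ < (p : ℝ) ^ (0 : ℤ) := by simpa using this
    have := (PadicInt.norm_lt_pow_iff_norm_le_pow_sub_one u 0).mp h1
    simpa using this
  -- injectivity of digit map
  have ginj : Function.Injective (fun i : ZMod p => PadicInt.toZMod (v i)) := by
    intro i j hij
    by_contra hne'
    have h1 : PadicInt.toZMod (v i - v j) = 0 := by
      rw [map_sub, sub_eq_zero]; exact hij
    have h2 := hsmall _ h1
    have h3 : T (yi i) - T (yi j) = (p : ℤ_[p]) ^ sN * (v i - v j) := by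
      have := hv i; have := hv j
      calc T (yi i) - T (yi j) = (T (yi i) - T y) - (T (yi j) - T y) := by ring
        _ = (p : ℤ_[p]) ^ sN * (v i - v j) := by rw [hv i, hv j]; ring
    have h4 : ‖T (yi i) - T (yi j)‖ ≤ (p : ℝ) ^ (-(sN : ℤ)) * (p : ℝ) ^ (-(1 : ℕ) : ℤ) := by
      rw [h3, norm_mul, PadicInt.norm_p_pow]
      exact mul_le_mul_of_nonneg_left h2 (by positivity)
    rw [hTij i j hne', ← zpow_add₀ (ne_of_gt hp0)] at h4
    have := (zpow_le_zpow_iff_right₀ hp1).mp h4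
    omega
  have gsurj := Finite.injective_iff_surjective.mp ginj
  obtain ⟨i, hi⟩ := gsurj (PadicInt.toZMod w)
  refine ⟨yi i, hyiball i, ?_⟩
  have h1 : PadicInt.toZMod (w - v i) = 0 := by
    rw [map_sub, sub_eq_zero]; exact hi.symm
  have h2 := hsmall _ h1
  have h3 : z - T (yi i) = (p : ℤ_[p]) ^ sN * (w - v i) := by
    calc z - T (yi i) = (z - T y) - (T (yi i) - T y) := by ring
      _ = (p : ℤ_[p]) ^ sN * (w - v i) := by rw [hw, hv i]; ring
  calc ‖z - T (yi i)‖ ≤ (p : ℝ) ^ (-(sN : ℤ)) * (p : ℝ) ^ (-(1 : ℕ) : ℤ) := by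
        rw [h3, norm_mul, PadicInt.norm_p_pow]
        exact mul_le_mul_of_nonneg_left h2 (by positivity)
    _ < (p : ℝ) ^ (-(sN : ℤ)) := by
        rw [← zpow_add₀ (ne_of_gt hp0)]
        apply zpow_lt_zpow_right₀ hp1
        omega
    _ = ‖z - T y‖ := hnorm.symm

/-- a `(p^{-a}, p^m)` locally scaling map restricts to a bijection from any
closed ball of radius `p^{-b} ≤ p^{-a}` onto the closed ball of radius `p^m · p^{-b}`
around the image of its center. -/
theorem locallyScaling_bijOn_closedBall {p : ℕ} [hp : Fact p.Prime]
    (a m b : ℕ) (hba : a ≤ b) (T : ℤ_[p] → ℤ_[p])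
    (hT : ∀ x y : ℤ_[p], ‖x - y‖ ≤ (p : ℝ) ^ (-(a : ℤ)) →
      ‖T x - T y‖ = (p : ℝ) ^ (m : ℕ) * ‖x - y‖)
    (x : ℤ_[p]) :
    Set.BijOn T (Metric.closedBall x ((p : ℝ) ^ (-(b : ℤ))))
      (Metric.closedBall (T x) ((p : ℝ) ^ (m : ℕ) * (p : ℝ) ^ (-(b : ℤ)))) := by
  have hp1 : (1 : ℝ) < p := by exact_mod_cast hp.out.one_lt
  have hp0 : (0 : ℝ) < p := lt_trans one_pos hp1
  have hpowle : (p : ℝ) ^ (-(b : ℤ)) ≤ (p : ℝ) ^ (-(a : ℤ)) :=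
    zpow_le_zpow_right₀ (le_of_lt hp1) (by omega)
  have hpair : ∀ y₁ ∈ closedBall x ((p : ℝ) ^ (-(b : ℤ))),
      ∀ y₂ ∈ closedBall x ((p : ℝ) ^ (-(b : ℤ))), ‖y₁ - y₂‖ ≤ (p : ℝ) ^ (-(b : ℤ)) := by
    intro y₁ h₁ y₂ h₂
    rw [mem_closedBall, dist_eq_norm] at h₁ h₂
    have : y₁ - y₂ = (y₁ - x) + (x - y₂) := by ring
    rw [this]
    refine le_trans (PadicInt.nonarchimedean _ _) (max_le h₁ ?_)
    rwa [← norm_neg, neg_sub]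
  refine ⟨?_, ?_, ?_⟩
  · -- MapsTo
    intro y hy
    rw [mem_closedBall, dist_eq_norm] at hy ⊢
    rw [hT y x (le_trans hy hpowle)]
    exact mul_le_mul_of_nonneg_left hy (by positivity)
  · -- InjOn
    intro y₁ h₁ y₂ h₂ heq
    have := hT y₁ y₂ (le_trans (hpair y₁ h₁ y₂ h₂) hpowle)
    rw [heq, sub_self, norm_zero] at this
    have h0 : ‖y₁ - y₂‖ = 0 := by
      have hpm : (0 : ℝ) < (p : ℝ) ^ (m : ℕ) := by positivity
      nlinarith [norm_nonneg (y₁ - y₂)]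
    rw [norm_eq_zero] at h0
    exact sub_eq_zero.mp h0
  · -- SurjOn
    intro z hz
    set B := closedBall x ((p : ℝ) ^ (-(b : ℤ))) with hB
    have hBc : IsCompact B := Metric.isClosed_closedBall.isCompact
    have hcont : ContinuousOn T B := by
      refine (LipschitzOnWith.of_dist_le_mul (K := ⟨(p : ℝ) ^ (m : ℕ), by positivity⟩)
        (f := T) (s := B) ?_).continuousOn
      intro y₁ h₁ y₂ h₂
      rw [dist_eq_norm, dist_eq_norm, hT y₁ y₂ (le_trans (hpair y₁ h₁ y₂ h₂) hpowle)]
      exact le_of_eq (by rfl)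
    have hK : IsCompact (T '' B) := hBc.image_of_continuousOn hcont
    have hKne : (T '' B).Nonempty :=
      ⟨T x, mem_image_of_mem T (mem_closedBall_self (by positivity))⟩
    obtain ⟨w₀, hw₀K, hmin⟩ := hK.exists_infDist_eq_dist hKne z
    obtain ⟨y, hyB, rfl⟩ := hw₀K
    by_cases h : z = T y
    · exact ⟨y, hyB, h.symm⟩
    · exfalso
      have hzy : ‖z - T y‖ ≤ (p : ℝ) ^ (m : ℕ) * (p : ℝ) ^ (-(b : ℤ)) := by
        have h1 : z - T y = (z - T x) + (T x - T y) := by ring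
        rw [h1]
        refine le_trans (PadicInt.nonarchimedean _ _) (max_le ?_ ?_)
        · rw [mem_closedBall, dist_eq_norm] at hz; exact hz
        · rw [hT x y (le_trans (hpair x (mem_closedBall_self (by positivity)) y hyB) hpowle)]
          exact mul_le_mul_of_nonneg_left
            (hpair x (mem_closedBall_self (by positivity)) y hyB) (by positivity)
      obtain ⟨y', hy'B, hlt⟩ := locallyScaling_improve a m b hba T hT x z y hyB hzy h
      have hle : Metric.infDist z (T '' B) ≤ dist z (T y') :=
        Metric.infDist_le_dist_of_mem (mem_image_of_mem _ hy'B)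
      rw [hmin, dist_eq_norm, dist_eq_norm] at hle
      linarith
end

section
/- Let T: Z_p → Z_p be (p^{-k}, p^k) locally scaling and B a closed ball of radius p^{-kj} (j ≥ 1). Then T^{-1}(B) is a disjoint union of exactly p^k closed balls of radius p^{-k(j+1)}, each lying in a distinct closed ball of radius p^{-kj}. -/
lemma isometry_iterate' {X : Type*} [MetricSpace X] {f : X → X} (hf : Isometry f) :
    ∀ n, Isometry f^[n] := by
  intro n
  induction n with
  | zero => exact isometry_id
  | succ n ih => rw [Function.iterate_succ]; exact ih.comp hf

lemma isometry_surj_of_compact {X : Type*} [MetricSpace X] [CompactSpace X] {f : X → X}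
    (hf : Isometry f) : Function.Surjective f := by
  intro x
  have hcl : IsClosed (Set.range f) := hf.isClosedEmbedding.isClosed_range
  suffices h : x ∈ closure (Set.range f) by rwa [hcl.closure_eq] at h
  rw [Metric.mem_closure_iff]
  intro ε hε
  obtain ⟨a, -, φ, hφ, hconv⟩ :=
    IsCompact.tendsto_subseq (x := fun n => f^[n] x) isCompact_univ (fun n => Set.mem_univ _)
  rw [Metric.tendsto_atTop] at hconv
  obtain ⟨N, hN⟩ := hconv (ε / 2) (by positivity)
  have h1 := hN N le_rfl
  have h2 := hN (N + 1) (by omega)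
  have hmono : φ N < φ (N + 1) := hφ (by omega)
  set d := φ (N + 1) - φ N with hd
  have hdd : φ N + d = φ (N + 1) := by omega
  have key : dist x (f^[d] x) < ε := by
    have h3 := (isometry_iterate' hf (φ N)).dist_eq (f^[d] x) x
    rw [← Function.iterate_add_apply, Nat.add_comm (φ N) d] at h3
    rw [dist_comm, ← h3, Nat.add_comm d (φ N), hdd]
    simp only [Function.comp_apply] at h1 h2
    calc dist (f^[φ (N + 1)] x) (f^[φ N] x)
        ≤ dist (f^[φ (N + 1)] x) a + dist (f^[φ N] x) a := dist_triangle_right _ _ _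
      _ < ε / 2 + ε / 2 := add_lt_add h2 h1
      _ = ε := by ring
  refine ⟨f^[d] x, ?_, key⟩
  have hd1 : d = (d - 1) + 1 := by omega
  rw [hd1, Function.iterate_succ_apply']
  exact Set.mem_range_self _



/-- for `T` `(p^{-k}, p^k)` locally scaling, the preimage of a closed ball
of radius `p^{-kj}` is a disjoint union of exactly `p^k` closed balls of radius
`p^{-k(j+1)}`, lying in pairwise distinct closed balls of radius `p^{-kj}`. -/
theorem locallyScaling_preimage_ball {p : ℕ} [hp : Fact p.Prime]
    (k j : ℕ) (hk : 1 ≤ k) (hj : 1 ≤ j) (T : ℤ_[p] → ℤ_[p])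
    (hT : ∀ x y : ℤ_[p], ‖x - y‖ ≤ (p : ℝ) ^ (-(k : ℤ)) →
      ‖T x - T y‖ = (p : ℝ) ^ (k : ℕ) * ‖x - y‖)
    (y : ℤ_[p]) :
    ∃ c : Fin (p ^ k) → ℤ_[p],
      (T ⁻¹' Metric.closedBall y ((p : ℝ) ^ (-(k * j : ℤ))) =
        ⋃ i, Metric.closedBall (c i) ((p : ℝ) ^ (-(k * (j + 1) : ℤ)))) ∧
      ∀ i i' : Fin (p ^ k), i ≠ i' → (p : ℝ) ^ (-(k * j : ℤ)) < ‖c i - c i'‖ := by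
  
  have hp1 : (1 : ℝ) < p := by exact_mod_cast hp.out.one_lt
  have hpne : (p : ℝ) ≠ 0 := by positivity
  have hpk : ∀ z : ℤ_[p], ‖(p : ℤ_[p]) ^ k * z‖ = (p : ℝ) ^ (-(k : ℤ)) * ‖z‖ := by
    intro z; rw [norm_mul, PadicInt.norm_p_pow]
  have hpkle : ∀ z : ℤ_[p], ‖(p : ℤ_[p]) ^ k * z‖ ≤ (p : ℝ) ^ (-(k : ℤ)) := by
    intro z
    rw [hpk]
    calc (p : ℝ) ^ (-(k : ℤ)) * ‖z‖ ≤ (p : ℝ) ^ (-(k : ℤ)) * 1 := by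
          have := z.norm_le_one
          have : (0:ℝ) < (p:ℝ) ^ (-(k:ℤ)) := by positivity
          nlinarith [z.norm_le_one]
      _ = _ := mul_one _
  have hgiso : ∀ i : Fin (p ^ k),
      Isometry (fun t : ℤ_[p] => T (((i : ℕ) : ℤ_[p]) + (p : ℤ_[p]) ^ k * t)) := by
    intro i
    apply Isometry.of_dist_eq
    intro t s
    have hsub : ((i : ℕ) : ℤ_[p]) + (p : ℤ_[p]) ^ k * t
        - (((i : ℕ) : ℤ_[p]) + (p : ℤ_[p]) ^ k * s) = (p : ℤ_[p]) ^ k * (t - s) := by ring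
    have hle : ‖((i : ℕ) : ℤ_[p]) + (p : ℤ_[p]) ^ k * t
        - (((i : ℕ) : ℤ_[p]) + (p : ℤ_[p]) ^ k * s)‖ ≤ (p : ℝ) ^ (-(k : ℤ)) := by
      rw [hsub]; exact hpkle _
    rw [dist_eq_norm, dist_eq_norm, hT _ _ hle, hsub, hpk, ← mul_assoc,
      ← zpow_natCast (p : ℝ), ← zpow_add₀ hpne]
    simp
  choose t ht using fun i => isometry_surj_of_compact (hgiso i) y
  set c : Fin (p ^ k) → ℤ_[p] :=
    fun i => ((i : ℕ) : ℤ_[p]) + (p : ℤ_[p]) ^ k * t i with hc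
  have hTc : ∀ i, T (c i) = y := ht
  have hpow : (p : ℝ) ^ (k : ℕ) * (p : ℝ) ^ (-(k * (j + 1) : ℤ)) = (p : ℝ) ^ (-(k * j : ℤ)) := by
    rw [← zpow_natCast (p : ℝ), ← zpow_add₀ hpne]
    congr 1; push_cast; ring
  have hkey : ∀ x z : ℤ_[p], T z = y → ‖x - z‖ ≤ (p : ℝ) ^ (-(k : ℤ)) →
      (‖T x - y‖ ≤ (p : ℝ) ^ (-(k * j : ℤ)) ↔ ‖x - z‖ ≤ (p : ℝ) ^ (-(k * (j + 1) : ℤ))) := by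
    intro x z hz hle
    rw [← hz, hT x z hle, ← hpow,
      mul_le_mul_iff_right₀ (by positivity : (0 : ℝ) < (p : ℝ) ^ (k : ℕ))]
  have hk1 : (p : ℝ) ^ (-(k * (j + 1) : ℤ)) ≤ (p : ℝ) ^ (-(k : ℤ)) := by
    apply zpow_le_zpow_right₀ hp1.le
    have : (k : ℤ) ≤ (k : ℤ) * ((j : ℤ) + 1) := by nlinarith [Int.ofNat_le.mpr hj, Int.ofNat_le.mpr hk]
    push_cast; omega
  have hk2 : (p : ℝ) ^ (-(k * j : ℤ)) ≤ (p : ℝ) ^ (-(k : ℤ)) := by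
    apply zpow_le_zpow_right₀ hp1.le
    have : (k : ℤ) ≤ (k : ℤ) * (j : ℤ) := by nlinarith [Int.ofNat_le.mpr hj, Int.ofNat_le.mpr hk]
    omega
  refine ⟨c, ?_, ?_⟩
  · ext x
    simp only [Set.mem_preimage, Metric.mem_closedBall, Set.mem_iUnion, dist_eq_norm]
    constructor
    · intro hx
      refine ⟨⟨x.appr k, x.appr_lt k⟩, ?_⟩
      have h1 : ‖x - ((x.appr k : ℕ) : ℤ_[p])‖ ≤ (p : ℝ) ^ (-(k : ℤ)) :=
        (PadicInt.norm_le_pow_iff_mem_span_pow _ k).mpr (x.appr_spec k)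
      have h2 : ‖x - c ⟨x.appr k, x.appr_lt k⟩‖ ≤ (p : ℝ) ^ (-(k : ℤ)) := by
        have hre : x - c ⟨x.appr k, x.appr_lt k⟩
            = (x - ((x.appr k : ℕ) : ℤ_[p])) + (-((p : ℤ_[p]) ^ k * t ⟨x.appr k, x.appr_lt k⟩)) := by
          simp only [hc]; ring
        rw [hre]
        refine le_trans (PadicInt.nonarchimedean _ _) (max_le h1 ?_)
        rw [norm_neg]; exact hpkle _
      exact (hkey x _ (hTc _) h2).mp hx
    · rintro ⟨i, hi⟩
      exact (hkey x _ (hTc i) (le_trans hi hk1)).mpr hi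
  · intro i i' hne
    set a : ℤ_[p] := ((i : ℕ) : ℤ_[p]) - ((i' : ℕ) : ℤ_[p]) with hadef
    have ha : (p : ℝ) ^ (-(k : ℤ)) < ‖a‖ := by
      by_contra hcon
      push_neg at hcon
      have hint : a = (((i : ℕ) : ℤ) - ((i' : ℕ) : ℤ) : ℤ) := by push_cast [hadef]; ring
      rw [hint, PadicInt.norm_int_le_pow_iff_dvd] at hcon
      have hz : ((i : ℕ) : ℤ) - ((i' : ℕ) : ℤ) = 0 := by
        refine Int.eq_zero_of_abs_lt_dvd hcon ?_
        have h1 : ((i : ℕ) : ℤ) < (p : ℤ) ^ k := by exact_mod_cast i.isLt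
        have h2 : ((i' : ℕ) : ℤ) < (p : ℤ) ^ k := by exact_mod_cast i'.isLt
        rw [abs_lt]; omega
      exact hne (Fin.ext (by omega))
    have hb : ‖(p : ℤ_[p]) ^ k * t i - (p : ℤ_[p]) ^ k * t i'‖ ≤ (p : ℝ) ^ (-(k : ℤ)) := by
      rw [← mul_sub]; exact hpkle _
    have hmax : ‖a‖ ≤ ‖c i - c i'‖ := by
      have hre : a = (c i - c i') + (-((p : ℤ_[p]) ^ k * t i - (p : ℤ_[p]) ^ k * t i')) := by
        simp only [hc, hadef]; ring
      have h2 : ‖a‖ ≤ max ‖c i - c i'‖ ‖-((p : ℤ_[p]) ^ k * t i - (p : ℤ_[p]) ^ k * t i')‖ := by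
        rw [hre]; exact PadicInt.nonarchimedean _ _
      rcases le_max_iff.mp h2 with h | h
      · exact h
      · rw [norm_neg] at h
        linarith [lt_of_lt_of_le ha (le_trans h hb)]
    calc (p : ℝ) ^ (-(k * j : ℤ)) ≤ (p : ℝ) ^ (-(k : ℤ)) := hk2
      _ < ‖a‖ := ha
      _ ≤ ‖c i - c i'‖ := hmax
end

section
/- Let T: Z_p → Z_p be (p^{-k}, p^k) locally scaling. Then for any j, n ≥ 1 and any y ∈ Z_p, the set T^{-n}(B(y, p^{-jk})) is a union of p^{kn} closed balls of radius p^{-k(n+j)}, exactly one inside each of the p^{kn} closed balls of radius p^{-kn} in Z_p. -/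
private lemma surj_of_isometry_compact {X : Type*} [MetricSpace X] [CompactSpace X]
    (f : X → X) (hf : Isometry f) : Function.Surjective f := by
  have hiter : ∀ m : ℕ, Isometry (f^[m]) := by
    intro m
    induction m with
    | zero => simpa using isometry_id
    | succ m ih => rw [Function.iterate_succ]; exact ih.comp hf
  intro y
  have hrange : IsClosed (Set.range f) := (isCompact_range hf.continuous).isClosed
  have hyc : y ∈ closure (Set.range f) := by
    rw [Metric.mem_closure_iff]
    intro ε hε
    obtain ⟨x, -, φ, hφ, hconv⟩ :=
      isCompact_univ.tendsto_subseq (fun n : ℕ => Set.mem_univ (f^[n] y))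
    have hc := hconv.cauchySeq
    rw [Metric.cauchySeq_iff] at hc
    obtain ⟨N, hN⟩ := hc ε hε
    have hlt : φ N < φ (N + 1) := hφ (Nat.lt_succ_self N)
    refine ⟨f^[φ (N + 1) - φ N] y, ?_, ?_⟩
    · obtain ⟨e, he⟩ : ∃ e, φ (N + 1) - φ N = e + 1 := ⟨φ (N + 1) - φ N - 1, by omega⟩
      exact ⟨f^[e] y, by rw [he, Function.iterate_succ_apply']⟩
    · have h1 : dist y (f^[φ (N + 1) - φ N] y)
          = dist (f^[φ N] y) (f^[φ N] (f^[φ (N + 1) - φ N] y)) :=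
        ((hiter (φ N)).dist_eq _ _).symm
      rw [h1, ← Function.iterate_add_apply]
      have h2 : φ N + (φ (N + 1) - φ N) = φ (N + 1) := by omega
      rw [h2]
      exact hN N le_rfl (N + 1) (by omega)
  rwa [hrange.closure_eq] at hyc

section main

variable {p : ℕ} [hp : Fact p.Prime] (k : ℕ)

private lemma scale_le_iff (hk : 1 ≤ k) (t : ℝ) (m : ℤ) :
    (p : ℝ) ^ (k : ℕ) * t ≤ (p : ℝ) ^ m ↔ t ≤ (p : ℝ) ^ (m - (k : ℤ)) := by
  have hp0 : (0 : ℝ) < p := by exact_mod_cast hp.out.pos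
  rw [mul_comm, ← zpow_natCast (p : ℝ) k, ← le_div_iff₀ (zpow_pos hp0 _),
    ← zpow_sub₀ hp0.ne']

private lemma padic_norm_sub_le (x y : ℤ_[p]) : ‖x - y‖ ≤ max ‖x‖ ‖y‖ := by
  rw [sub_eq_add_neg]
  exact (PadicInt.nonarchimedean _ _).trans (by rw [norm_neg])

private lemma exists_preimage (T : ℤ_[p] → ℤ_[p])
    (hT : ∀ x y : ℤ_[p], ‖x - y‖ ≤ (p : ℝ) ^ (-(k : ℤ)) →
      ‖T x - T y‖ = (p : ℝ) ^ (k : ℕ) * ‖x - y‖)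
    (a b : ℤ_[p]) : ∃ x : ℤ_[p], T x = b ∧ ‖x - a‖ ≤ (p : ℝ) ^ (-(k : ℤ)) := by
  have hp0 : (0 : ℝ) < p := by exact_mod_cast hp.out.pos
  set f : ℤ_[p] → ℤ_[p] := fun t => T (a + (p : ℤ_[p]) ^ k * t) with hf_def
  have hnorm : ∀ t₁ t₂ : ℤ_[p],
      ‖(a + (p : ℤ_[p]) ^ k * t₁) - (a + (p : ℤ_[p]) ^ k * t₂)‖
        = (p : ℝ) ^ (-(k : ℤ)) * ‖t₁ - t₂‖ := by
    intro t₁ t₂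
    have : (a + (p : ℤ_[p]) ^ k * t₁) - (a + (p : ℤ_[p]) ^ k * t₂)
        = (p : ℤ_[p]) ^ k * (t₁ - t₂) := by ring
    rw [this, norm_mul, PadicInt.norm_p_pow]
  have hf : Isometry f := by
    refine Isometry.of_dist_eq fun t₁ t₂ => ?_
    have hle : ‖(a + (p : ℤ_[p]) ^ k * t₁) - (a + (p : ℤ_[p]) ^ k * t₂)‖
        ≤ (p : ℝ) ^ (-(k : ℤ)) := by
      rw [hnorm]
      calc (p : ℝ) ^ (-(k : ℤ)) * ‖t₁ - t₂‖ ≤ (p : ℝ) ^ (-(k : ℤ)) * 1 := by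
            exact mul_le_mul_of_nonneg_left (PadicInt.norm_le_one _) (by positivity)
        _ = (p : ℝ) ^ (-(k : ℤ)) := mul_one _
    have := hT _ _ hle
    rw [hnorm] at this
    simp only [hf_def, dist_eq_norm, this]
    rw [← mul_assoc, ← zpow_natCast (p : ℝ) k, ← zpow_add₀ hp0.ne']
    simp
  obtain ⟨t, ht⟩ := surj_of_isometry_compact f hf b
  refine ⟨a + (p : ℤ_[p]) ^ k * t, ht, ?_⟩
  have : a + (p : ℤ_[p]) ^ k * t - a = (p : ℤ_[p]) ^ k * t := by ring
  rw [this, norm_mul, PadicInt.norm_p_pow]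
  calc (p : ℝ) ^ (-(k : ℤ)) * ‖t‖ ≤ (p : ℝ) ^ (-(k : ℤ)) * 1 :=
        mul_le_mul_of_nonneg_left (PadicInt.norm_le_one _) (by positivity)
    _ = (p : ℝ) ^ (-(k : ℤ)) := mul_one _

private lemma key_lemma (j : ℕ) (hk : 1 ≤ k) (T : ℤ_[p] → ℤ_[p])
    (hT : ∀ x y : ℤ_[p], ‖x - y‖ ≤ (p : ℝ) ^ (-(k : ℤ)) →
      ‖T x - T y‖ = (p : ℝ) ^ (k : ℕ) * ‖x - y‖) :
    ∀ n : ℕ, 1 ≤ n → ∀ y a : ℤ_[p], ∃ c : ℤ_[p],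
      ‖c - a‖ ≤ (p : ℝ) ^ (-(k * n : ℤ)) ∧
      ∀ x : ℤ_[p],
        (‖T^[n] x - y‖ ≤ (p : ℝ) ^ (-(j * k : ℤ)) ∧ ‖x - a‖ ≤ (p : ℝ) ^ (-(k * n : ℤ)))
          ↔ ‖x - c‖ ≤ (p : ℝ) ^ (-(k * (n + j) : ℤ)) := by
  have hp1 : (1 : ℝ) ≤ p := by exact_mod_cast hp.out.one_lt.le
  have hmono : ∀ A B : ℤ, A ≤ B → (p : ℝ) ^ A ≤ (p : ℝ) ^ B := fun A B h =>
    zpow_le_zpow_right₀ hp1 h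
  intro n
  induction n with
  | zero => omega
  | succ m ih =>
    intro _ y a
    rcases Nat.eq_zero_or_pos m with hm | hm
    · -- base case: n = 1
      subst hm
      obtain ⟨c, hTc, hca⟩ := exists_preimage k T hT a y
      have hck : ‖c - a‖ ≤ (p : ℝ) ^ (-(k * (0 + 1 : ℕ) : ℤ)) := by
        refine hca.trans (hmono _ _ ?_)
        omega
      refine ⟨c, hck, fun x => ?_⟩
      constructor
      · rintro ⟨h1, h2⟩
        have hxc : ‖x - c‖ ≤ (p : ℝ) ^ (-(k : ℤ)) := by
          have : x - c = (x - a) - (c - a) := by ring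
          rw [this]
          refine (padic_norm_sub_le _ _).trans (max_le ?_ ?_) <;>
            [exact h2.trans (hmono _ _ (by push_cast; nlinarith)); exact hca]
        have := hT x c hxc
        rw [Function.iterate_one, ← hTc] at h1
        rw [this] at h1
        rw [scale_le_iff k hk] at h1
        refine h1.trans (hmono _ _ ?_)
        push_cast
        nlinarith
      · intro hxc
        have hxc' : ‖x - c‖ ≤ (p : ℝ) ^ (-(k : ℤ)) := by
          refine hxc.trans (hmono _ _ ?_)
          push_cast
          nlinarith
        have hTeq := hT x c hxc'
        constructor
        · rw [Function.iterate_one, ← hTc, hTeq, scale_le_iff k hk]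
          refine hxc.trans (hmono _ _ ?_)
          push_cast
          nlinarith
        · have : x - a = (x - c) + (c - a) := by ring
          rw [this]
          refine (PadicInt.nonarchimedean _ _).trans (max_le ?_ ?_)
          · refine hxc.trans (hmono _ _ ?_)
            push_cast
            nlinarith
          · exact hck
    · -- inductive step: n = m + 1 with m ≥ 1
      obtain ⟨c', hc'Ta, hprop⟩ := ih hm y (T a)
      obtain ⟨c0, hTc0, hc0a⟩ := exists_preimage k T hT a c'
      have hc0a' : ‖c0 - a‖ ≤ (p : ℝ) ^ (-(k * (m + 1 : ℕ) : ℤ)) := by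
        by_cases hz : c0 - a = 0
        · rw [hz, norm_zero]; positivity
        · have hTeq := hT c0 a hc0a
          rw [hTc0] at hTeq
          have h2 : (p : ℝ) ^ (k : ℕ) * ‖c0 - a‖ ≤ (p : ℝ) ^ (-(k * m : ℤ)) := by
            rw [← hTeq]; exact hc'Ta
          rw [scale_le_iff k hk] at h2
          refine h2.trans (hmono _ _ ?_)
          push_cast
          ring_nf
          linarith
      refine ⟨c0, hc0a', fun x => ?_⟩
      constructor
      · rintro ⟨h1, h2⟩
        have hxa : ‖x - a‖ ≤ (p : ℝ) ^ (-(k : ℤ)) :=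
          h2.trans (hmono _ _ (by push_cast; nlinarith))
        have hTxa := hT x a hxa
        have hxc0 : ‖x - c0‖ ≤ (p : ℝ) ^ (-(k : ℤ)) := by
          have : x - c0 = (x - a) - (c0 - a) := by ring
          rw [this]
          refine (padic_norm_sub_le _ _).trans (max_le hxa ?_)
          exact hc0a'.trans (hmono _ _ (by push_cast; nlinarith))
        have hTxc0 := hT x c0 hxc0
        rw [hTc0] at hTxc0
        have hTxTa : ‖T x - T a‖ ≤ (p : ℝ) ^ (-(k * m : ℤ)) := by
          rw [hTxa, scale_le_iff k hk]
          refine h2.trans (hmono _ _ ?_)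
          push_cast
          ring_nf
          linarith
        have h1' : ‖T^[m] (T x) - y‖ ≤ (p : ℝ) ^ (-(j * k : ℤ)) := by
          rwa [← Function.iterate_succ_apply]
        have := (hprop (T x)).mp ⟨h1', hTxTa⟩
        rw [hTxc0, scale_le_iff k hk] at this
        refine this.trans (hmono _ _ ?_)
        push_cast
        ring_nf
        linarith
      · intro hxc0
        have hxc0' : ‖x - c0‖ ≤ (p : ℝ) ^ (-(k : ℤ)) :=
          hxc0.trans (hmono _ _ (by push_cast; nlinarith))
        have hTxc0 := hT x c0 hxc0'
        rw [hTc0] at hTxc0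
        have hTxc' : ‖T x - c'‖ ≤ (p : ℝ) ^ (-(k * (m + j) : ℤ)) := by
          rw [hTxc0, scale_le_iff k hk]
          refine hxc0.trans (hmono _ _ ?_)
          push_cast
          ring_nf
          linarith
        have hTxinball : ‖T x - c'‖ ≤ (p : ℝ) ^ (-(k * m : ℤ)) :=
          hTxc'.trans (hmono _ _ (by push_cast; nlinarith))
        have hhh := (hprop (T x)).mpr hTxc'
        obtain ⟨h1', -⟩ := hhh
        constructor
        · rwa [Function.iterate_succ_apply]
        · have : x - a = (x - c0) + (c0 - a) := by ring
          rw [this]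
          refine (PadicInt.nonarchimedean _ _).trans (max_le ?_ hc0a')
          refine hxc0.trans (hmono _ _ ?_)
          push_cast
          nlinarith

end main

/-- for `T` `(p^{-k}, p^k)` locally scaling, `T^{-n}(B(y, p^{-jk}))` is a
union of `p^{kn}` closed balls of radius `p^{-k(n+j)}`, exactly one inside each closed
ball of radius `p^{-kn}` in `ℤ_p`. -/
theorem locallyScaling_iterate_preimage_ball {p : ℕ} [hp : Fact p.Prime]
    (k j n : ℕ) (hk : 1 ≤ k) (hj : 1 ≤ j) (hn : 1 ≤ n) (T : ℤ_[p] → ℤ_[p])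
    (hT : ∀ x y : ℤ_[p], ‖x - y‖ ≤ (p : ℝ) ^ (-(k : ℤ)) →
      ‖T x - T y‖ = (p : ℝ) ^ (k : ℕ) * ‖x - y‖)
    (y : ℤ_[p]) :
    ∃ c : Fin (p ^ (k * n)) → ℤ_[p],
      ((T^[n]) ⁻¹' Metric.closedBall y ((p : ℝ) ^ (-(j * k : ℤ))) =
        ⋃ i, Metric.closedBall (c i) ((p : ℝ) ^ (-(k * (n + j) : ℤ)))) ∧
      ∀ z : ℤ_[p], ∃! i : Fin (p ^ (k * n)), ‖z - c i‖ ≤ (p : ℝ) ^ (-(k * n : ℤ)) := by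
  have hkey := key_lemma k j hk T hT n hn y
  choose c hc1 hc2 using fun i : Fin (p ^ (k * n)) => hkey ((i : ℕ) : ℤ_[p])
  -- each z is close to exactly one natural center
  have hnat : ∀ z : ℤ_[p], ∃! i : Fin (p ^ (k * n)),
      ‖z - ((i : ℕ) : ℤ_[p])‖ ≤ (p : ℝ) ^ (-(k * n : ℤ)) := by
    intro z
    refine ⟨⟨z.appr (k * n), z.appr_lt (k * n)⟩, ?_, ?_⟩
    · have := z.appr_spec (k * n)
      rw [← PadicInt.norm_le_pow_iff_mem_span_pow] at this
      simpa using this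
    · rintro ⟨i, hi⟩ hile
      have hz := z.appr_spec (k * n)
      rw [← PadicInt.norm_le_pow_iff_mem_span_pow] at hz
      have hdiff : ‖(((i : ℤ) - (z.appr (k * n) : ℤ) : ℤ) : ℤ_[p])‖ ≤ (p : ℝ) ^ (-(k * n : ℤ)) := by
        have : (((i : ℤ) - (z.appr (k * n) : ℤ) : ℤ) : ℤ_[p])
            = (z - (z.appr (k * n) : ℤ_[p])) - (z - (i : ℤ_[p])) := by
          push_cast
          ring
        rw [this]
        refine (padic_norm_sub_le _ _).trans (max_le hz ?_)
        simpa using hile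
      rw [show (-((k : ℤ) * n)) = -(((k * n : ℕ) : ℤ)) by push_cast; try ring,
        PadicInt.norm_int_le_pow_iff_dvd] at hdiff
      have habs : ((i : ℤ) - (z.appr (k * n) : ℤ)) = 0 := by
        refine Int.eq_zero_of_abs_lt_dvd hdiff ?_
        have h1 : (i : ℤ) < (p : ℤ) ^ (k * n) := by exact_mod_cast hi
        have h2 : ((z.appr (k * n) : ℤ)) < (p : ℤ) ^ (k * n) := by
          exact_mod_cast z.appr_lt (k * n)
        rw [abs_sub_lt_iff]
        constructor <;> omega
      have : (i : ℤ) = (z.appr (k * n) : ℤ) := by omega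
      exact Fin.ext (by exact_mod_cast this)
  -- transfer closeness between natural centers and the real centers
  have htrans : ∀ (z : ℤ_[p]) (i : Fin (p ^ (k * n))),
      ‖z - c i‖ ≤ (p : ℝ) ^ (-(k * n : ℤ)) ↔
      ‖z - ((i : ℕ) : ℤ_[p])‖ ≤ (p : ℝ) ^ (-(k * n : ℤ)) := by
    intro z i
    constructor <;> intro h
    · have : z - ((i : ℕ) : ℤ_[p]) = (z - c i) + (c i - ((i : ℕ) : ℤ_[p])) := by ring
      rw [this]
      exact (PadicInt.nonarchimedean _ _).trans (max_le h (hc1 i))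
    · have : z - c i = (z - ((i : ℕ) : ℤ_[p])) - (c i - ((i : ℕ) : ℤ_[p])) := by ring
      rw [this]
      exact (padic_norm_sub_le _ _).trans (max_le h (hc1 i))
  refine ⟨c, ?_, ?_⟩
  · ext x
    simp only [Set.mem_preimage, Metric.mem_closedBall, Set.mem_iUnion, dist_eq_norm]
    constructor
    · intro hx
      obtain ⟨i, hi, -⟩ := hnat x
      exact ⟨i, (hc2 i x).mp ⟨hx, hi⟩⟩
    · rintro ⟨i, hi⟩
      exact ((hc2 i x).mpr hi).1
  · intro z
    obtain ⟨i, hi, huniq⟩ := hnat z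
    exact ⟨i, (htrans z i).mpr hi, fun i' hi' => huniq i' ((htrans z i').mp hi')⟩
end

section
/- For every n ≥ 1, the map Z_p → Z_p given by x ↦ binom(x, n) is p^{⌊log_p n⌋}-Lipschitz: |binom(x,n) - binom(y,n)| ≤ p^{⌊log_p n⌋} · |x - y| for all x, y ∈ Z_p. -/
open Finset

private lemma choose_norm_le {p : ℕ} [hp : Fact p.Prime] (z : ℤ_[p]) (k : ℕ) (hk : 1 ≤ k) :
    ‖(Ring.choose z k : ℤ_[p])‖ * ‖((k : ℤ_[p]))‖ ≤ ‖z‖ := by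
  have h := Ring.choose_smul_choose z (n := k) (k := 1) hk
  rw [Nat.choose_one_right, Ring.choose_one_right, nsmul_eq_mul, Nat.cast_one] at h
  calc ‖(Ring.choose z k : ℤ_[p])‖ * ‖((k : ℤ_[p]))‖
      = ‖(k : ℤ_[p]) * Ring.choose z k‖ := by rw [norm_mul, mul_comm]
    _ = ‖z * Ring.choose (z - 1) (k - 1)‖ := by rw [h]
    _ ≤ ‖z‖ * 1 := by
        rw [norm_mul]
        exact mul_le_mul_of_nonneg_left (PadicInt.norm_le_one _) (norm_nonneg _)
    _ = ‖z‖ := mul_one _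

private lemma nat_norm_ge {p : ℕ} [hp : Fact p.Prime] {k n : ℕ} (hk : 1 ≤ k) (hkn : k ≤ n) :
    ((p : ℝ) ^ (Nat.log p n))⁻¹ ≤ ‖((k : ℤ_[p]))‖ := by
  have hk0 : k ≠ 0 := by omega
  set v := k.factorization p with hv
  have hpp := hp.out
  have hsplit : k = p ^ v * (k / p ^ v) := (Nat.ordProj_mul_ordCompl_eq_self k p).symm
  have hnd : ¬ (p ∣ k / p ^ v) := Nat.not_dvd_ordCompl hpp hk0
  have hcast : (((k / p ^ v : ℕ) : ℤ) : ℤ_[p]) = ((k / p ^ v : ℕ) : ℤ_[p]) :=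
    Int.cast_natCast _
  have hm1 : ‖((k / p ^ v : ℕ) : ℤ_[p])‖ = 1 := by
    rcases lt_or_eq_of_le (PadicInt.norm_le_one ((k / p ^ v : ℕ) : ℤ_[p])) with h | h
    · exfalso
      rw [← hcast] at h
      exact hnd (by exact_mod_cast (PadicInt.norm_int_lt_one_iff_dvd _).mp h)
    · exact h
  have hknorm : ‖((k : ℤ_[p]))‖ = ((p : ℝ))⁻¹ ^ v := by
    conv_lhs => rw [hsplit]
    push_cast
    rw [norm_mul, PadicInt.norm_p_pow, hm1, mul_one, zpow_neg, zpow_natCast, inv_pow]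
  have hvle : v ≤ Nat.log p n := by
    have hpow : p ^ v ≤ n := le_trans (Nat.ordProj_le p hk0) hkn
    exact (Nat.le_log_iff_pow_le hpp.one_lt (by omega)).mpr hpow
  rw [hknorm, inv_pow]
  have hp1 : (1 : ℝ) ≤ (p : ℝ) := by exact_mod_cast hpp.one_lt.le
  have hpos : (0 : ℝ) < (p : ℝ) ^ v := by
    have := hpp.pos; positivity
  exact inv_anti₀ hpos (pow_le_pow_right₀ hp1 hvle)

/-- `x ↦ binom(x, n)` is `p^{⌊log_p n⌋}`-Lipschitz on `ℤ_p`. -/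
theorem choose_lipschitz {p : ℕ} [hp : Fact p.Prime] (n : ℕ) (hn : 1 ≤ n) (x y : ℤ_[p]) :
    ‖(Ring.choose x n : ℤ_[p]) - Ring.choose y n‖ ≤ (p : ℝ) ^ (Nat.log p n) * ‖x - y‖ := by
  have hx : x = y + (x - y) := by ring
  have hvdm : (Ring.choose x n : ℤ_[p]) =
      ∑ ij ∈ antidiagonal n, Ring.choose y ij.1 * Ring.choose (x - y) ij.2 := by
    conv_lhs => rw [hx]
    exact Ring.add_choose_eq n (Commute.all _ _)
  have hmem : ((n, 0) : ℕ × ℕ) ∈ antidiagonal n := by simp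
  have hterm : Ring.choose y (n, 0).1 * Ring.choose (x - y) ((n, 0) : ℕ × ℕ).2
      = (Ring.choose y n : ℤ_[p]) := by
    simp [Ring.choose_zero_right]
  have hdiff : (Ring.choose x n : ℤ_[p]) - Ring.choose y n =
      ∑ ij ∈ (antidiagonal n).erase (n, 0), Ring.choose y ij.1 * Ring.choose (x - y) ij.2 := by
    rw [hvdm, ← Finset.add_sum_erase _ _ hmem, hterm]
    ring
  rw [hdiff]
  apply IsUltrametricDist.norm_sum_le_of_forall_le_of_nonneg (by positivity)
  intro ij hij
  have hij' := Finset.mem_of_mem_erase hij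
  have hsum : ij.1 + ij.2 = n := Finset.HasAntidiagonal.mem_antidiagonal.mp hij'
  have hne : ij ≠ (n, 0) := Finset.ne_of_mem_erase hij
  have h2 : 1 ≤ ij.2 := by
    rcases Nat.eq_zero_or_pos ij.2 with h | h
    · exfalso; apply hne; have : ij.1 = n := by omega
      exact Prod.ext this h
    · exact h
  have h2n : ij.2 ≤ n := by omega
  have hkey := choose_norm_le (x - y) ij.2 h2
  have hge := nat_norm_ge (p := p) h2 h2n
  have hppos : (0 : ℝ) < (p : ℝ) ^ Nat.log p n := by
    have := hp.out.pos; positivity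
  calc ‖Ring.choose y ij.1 * Ring.choose (x - y) ij.2‖
      ≤ 1 * ‖(Ring.choose (x - y) ij.2 : ℤ_[p])‖ := by
        rw [norm_mul]
        exact mul_le_mul_of_nonneg_right (PadicInt.norm_le_one _) (norm_nonneg _)
    _ = ‖(Ring.choose (x - y) ij.2 : ℤ_[p])‖ := one_mul _
    _ ≤ (p : ℝ) ^ (Nat.log p n) * ‖x - y‖ := by
        by_cases hc : (Ring.choose (x - y) ij.2 : ℤ_[p]) = 0
        · rw [hc, norm_zero]; positivity
        · have hnpos : 0 < ‖(Ring.choose (x - y) ij.2 : ℤ_[p])‖ := norm_pos_iff.mpr hc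
          have step : ‖(Ring.choose (x - y) ij.2 : ℤ_[p])‖ * ((p : ℝ) ^ (Nat.log p n))⁻¹
              ≤ ‖x - y‖ := le_trans (mul_le_mul_of_nonneg_left hge hnpos.le) hkey
          calc ‖(Ring.choose (x - y) ij.2 : ℤ_[p])‖
              = (p : ℝ) ^ (Nat.log p n) *
                (‖(Ring.choose (x - y) ij.2 : ℤ_[p])‖ * ((p : ℝ) ^ (Nat.log p n))⁻¹) := by
                field_simp
            _ ≤ (p : ℝ) ^ (Nat.log p n) * ‖x - y‖ :=
                mul_le_mul_of_nonneg_left step hppos.le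
end

section
/- Let T(x) = Σ_{n≥0} A_n binom(x,n) be a uniformly convergent Mahler series on Z_p, and set C = max_n p^{⌊log_p n⌋}|A_n|. Suppose the maximum is attained at a unique n_0, that n_0 = p^k with k > 0, and that |A_{n_0}| = 1 (so C = p^k). Then T is (p^{-k}, p^k) locally scaling. -/
open Polynomial Finset

section Aux

variable {p : ℕ} [hp : Fact p.Prime]

lemma aux_dp_cast (r : ℤ_[p]) (n : ℕ) :
    (descPochhammer ℤ n).smeval r = (descPochhammer ℤ_[p] n).eval r := by
  rw [← Polynomial.aeval_eq_smeval, aeval_def, ← eval_map, descPochhammer_map]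

lemma aux_fact_choose (x : ℤ_[p]) (n : ℕ) :
    (n.factorial : ℤ_[p]) * Ring.choose x n = (descPochhammer ℤ_[p] n).eval x := by
  rw [← aux_dp_cast, Ring.descPochhammer_eq_factorial_smul_choose, nsmul_eq_mul]

lemma aux_norm_natCast_ge (n : ℕ) (hn : n ≠ 0) :
    ((p:ℝ))^(-(Nat.log p n : ℤ)) ≤ ‖(n : ℤ_[p])‖ := by
  by_contra hcon
  push_neg at hcon
  have h1 : ‖((n : ℤ) : ℤ_[p])‖ ≤ (p:ℝ)^(-(Nat.log p n + 1 : ℕ) : ℤ) := by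
    rw [PadicInt.norm_le_pow_iff_norm_lt_pow_add_one]
    rw [show (-((Nat.log p n + 1 : ℕ) : ℤ) + 1) = -(Nat.log p n : ℤ) by push_cast; ring]
    exact_mod_cast hcon
  rw [PadicInt.norm_int_le_pow_iff_dvd] at h1
  have h2 : (p:ℤ)^(Nat.log p n + 1) ≤ (n:ℤ) := by
    refine Int.le_of_dvd (by exact_mod_cast Nat.pos_of_ne_zero hn) h1
  have h3 : p^(Nat.log p n + 1) ≤ n := by exact_mod_cast h2
  exact absurd (Nat.lt_pow_succ_log_self hp.out.one_lt n) (not_lt.mpr h3)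

lemma aux_choose_norm_mul (x : ℤ_[p]) (n : ℕ) (hn : n ≠ 0) :
    ‖Ring.choose x n‖ * ‖(n : ℤ_[p])‖ ≤ ‖x‖ := by
  obtain ⟨m, rfl⟩ := Nat.exists_eq_succ_of_ne_zero hn
  show ‖Ring.choose x (m+1)‖ * ‖((m+1 : ℕ) : ℤ_[p])‖ ≤ ‖x‖
  have key : ((m+1).factorial : ℤ_[p]) * Ring.choose x (m+1)
      = x * ((m.factorial : ℤ_[p]) * Ring.choose (x - 1) m) := by
    rw [aux_fact_choose, aux_fact_choose, descPochhammer_succ_left, eval_mul, eval_X, eval_comp,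
      eval_sub, eval_X, eval_one]
  have h2 := congrArg norm key
  rw [norm_mul, norm_mul, norm_mul] at h2
  have hfact : ((m+1).factorial : ℤ_[p]) = ((m+1 : ℕ) : ℤ_[p]) * (m.factorial : ℤ_[p]) := by
    rw [Nat.factorial_succ]; push_cast; ring
  rw [hfact, norm_mul] at h2
  have hmf : (0:ℝ) < ‖(m.factorial : ℤ_[p])‖ :=
    norm_pos_iff.mpr (Nat.cast_ne_zero.mpr (Nat.factorial_ne_zero m))
  have hle : ‖x‖ * (‖(m.factorial : ℤ_[p])‖ * ‖Ring.choose (x-1) m‖)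
      ≤ ‖x‖ * ‖(m.factorial : ℤ_[p])‖ := by
    refine mul_le_mul_of_nonneg_left ?_ (norm_nonneg x)
    exact mul_le_of_le_one_right hmf.le (PadicInt.norm_le_one _)
  rw [← h2] at hle
  refine (mul_le_mul_iff_of_pos_right hmf).mp ?_
  calc ‖Ring.choose x (m+1)‖ * ‖((m+1 : ℕ) : ℤ_[p])‖ * ‖(m.factorial : ℤ_[p])‖
      = ‖((m+1 : ℕ) : ℤ_[p])‖ * ‖(m.factorial : ℤ_[p])‖ * ‖Ring.choose x (m+1)‖ := by ring
    _ ≤ ‖x‖ * ‖(m.factorial : ℤ_[p])‖ := hle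

lemma aux_choose_norm_le (x : ℤ_[p]) (n : ℕ) (hn : n ≠ 0) :
    ‖Ring.choose x n‖ ≤ (p:ℝ)^(Nat.log p n : ℤ) * ‖x‖ := by
  have h1 := aux_choose_norm_mul x n hn
  have h2 := aux_norm_natCast_ge (p := p) n hn
  have hp1 : (0:ℝ) < (p:ℝ)^(Nat.log p n : ℤ) := zpow_pos (by exact_mod_cast hp.out.pos) _
  have h3 : ‖Ring.choose x n‖ * (p:ℝ)^(-(Nat.log p n : ℤ)) ≤ ‖x‖ :=
    le_trans (mul_le_mul_of_nonneg_left h2 (norm_nonneg _)) h1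
  calc ‖Ring.choose x n‖
      = (‖Ring.choose x n‖ * (p:ℝ)^(-(Nat.log p n : ℤ))) * (p:ℝ)^(Nat.log p n : ℤ) := by
        rw [mul_assoc, ← zpow_add₀ (ne_of_gt (by exact_mod_cast hp.out.pos))]
        simp
    _ ≤ ‖x‖ * (p:ℝ)^(Nat.log p n : ℤ) := mul_le_mul_of_nonneg_right h3 hp1.le
    _ = (p:ℝ)^(Nat.log p n : ℤ) * ‖x‖ := mul_comm _ _

lemma aux_norm_add_eq {a b : ℤ_[p]} (h : ‖b‖ < ‖a‖) : ‖a + b‖ = ‖a‖ := by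
  rw [PadicInt.norm_add_eq_max_of_ne h.ne']
  exact max_eq_left h.le

lemma aux_dp_small {h : ℤ_[p]} {k : ℕ} (hk : 0 < k) (hh : ‖h‖ ≤ (p:ℝ)^(-(k:ℤ))) :
    ∀ j : ℕ, j + 1 ≤ p^k →
      ‖(descPochhammer ℤ_[p] (j+1)).eval h‖ = ‖h‖ * ‖(j.factorial : ℤ_[p])‖ := by
  intro j
  induction j with
  | zero => intro _; simp [descPochhammer_one]
  | succ j ih =>
    intro hj
    have hj' : j + 1 ≤ p^k := le_trans (by omega) hj
    have hlog : Nat.log p (j+1) < k := Nat.log_lt_of_lt_pow (by omega) (by omega)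
    have hnorm_lt : ‖h‖ < ‖((j+1 : ℕ) : ℤ_[p])‖ := by
      refine lt_of_le_of_lt hh (lt_of_lt_of_le ?_ (aux_norm_natCast_ge (j+1) (by omega)))
      refine zpow_lt_zpow_right₀ (by exact_mod_cast hp.out.one_lt) (by omega)
    have heval : (descPochhammer ℤ_[p] (j+1+1)).eval h
        = (descPochhammer ℤ_[p] (j+1)).eval h * (h - ((j+1 : ℕ) : ℤ_[p])) := by
      rw [descPochhammer_succ_eval]
    rw [heval, norm_mul, ih hj']
    have : ‖h - ((j+1 : ℕ) : ℤ_[p])‖ = ‖((j+1 : ℕ) : ℤ_[p])‖ := by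
      rw [show h - ((j+1 : ℕ) : ℤ_[p]) = -((j+1 : ℕ) : ℤ_[p]) + h by ring]
      rw [aux_norm_add_eq (by rwa [norm_neg])]
      exact norm_neg _
    rw [this]
    have hfact : ((j+1).factorial : ℤ_[p]) = ((j+1 : ℕ) : ℤ_[p]) * (j.factorial : ℤ_[p]) := by
      rw [Nat.factorial_succ]; push_cast; try ring
    rw [hfact, norm_mul]; ring

lemma aux_choose_pk {h : ℤ_[p]} {k : ℕ} (hk : 0 < k) (hh : ‖h‖ ≤ (p:ℝ)^(-(k:ℤ))) :
    ‖Ring.choose h (p^k)‖ = (p:ℝ)^(k:ℕ) * ‖h‖ := by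
  have hpk : 0 < p^k := pow_pos hp.out.pos k |>.trans_le le_rfl
  have hsucc : p^k - 1 + 1 = p^k := Nat.succ_pred_eq_of_pos hpk
  have key := congrArg norm (aux_fact_choose h (p^k))
  rw [norm_mul] at key
  rw [← hsucc] at key
  rw [aux_dp_small hk hh _ (le_of_eq hsucc)] at key
  have hfact : ((p^k - 1 + 1).factorial : ℤ_[p])
      = ((p^k : ℕ) : ℤ_[p]) * ((p^k - 1).factorial : ℤ_[p]) := by
    rw [Nat.factorial_succ, hsucc]; push_cast; ring
  rw [hfact, norm_mul] at key
  have hnp : ‖((p^k : ℕ) : ℤ_[p])‖ = (p:ℝ)^(-(k:ℤ)) := by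
    push_cast
    exact PadicInt.norm_p_pow k
  rw [hnp] at key
  have hmf : (0:ℝ) < ‖(((p^k - 1).factorial : ℕ) : ℤ_[p])‖ :=
    norm_pos_iff.mpr (Nat.cast_ne_zero.mpr (Nat.factorial_ne_zero _))
  have hppos : (0:ℝ) < (p:ℝ) := by exact_mod_cast hp.out.pos
  -- key : p^{-k} * ‖(p^k-1)!‖ * ‖choose h (p^k)‖ = ‖h‖ * ‖(p^k-1)!‖
  rw [hsucc] at key
  have h2 : (p:ℝ)^(-(k:ℤ)) * ‖Ring.choose h (p^k)‖ = ‖h‖ := by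
    field_simp at key ⊢
    nlinarith [key, hmf]
  calc ‖Ring.choose h (p^k)‖
      = (p:ℝ)^(k:ℕ) * ((p:ℝ)^(-(k:ℤ)) * ‖Ring.choose h (p^k)‖) := by
        rw [← mul_assoc, ← zpow_natCast (p:ℝ) k, ← zpow_add₀ hppos.ne', add_neg_cancel,
          zpow_zero, one_mul]
    _ = (p:ℝ)^(k:ℕ) * ‖h‖ := by rw [h2]

lemma aux_sum_repr (x y : ℤ_[p]) (n : ℕ) :
    Ring.choose x n - Ring.choose y n
      = ∑ ij ∈ (antidiagonal n).erase (0, n),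
          Ring.choose (x - y) ij.1 * Ring.choose y ij.2 := by
  have hx : x = (x - y) + y := by ring
  have hvan := Ring.add_choose_eq (r := x - y) (s := y) n (Commute.all _ _)
  have hmem : ((0 : ℕ), n) ∈ antidiagonal n := by simp
  have hsplit := Finset.add_sum_erase _ (fun ij : ℕ × ℕ => Ring.choose (x-y) ij.1 * Ring.choose y ij.2) hmem
  simp only at hsplit
  rw [← hvan, Ring.choose_zero_right, one_mul, ← hx] at hsplit
  exact sub_eq_of_eq_add' hsplit.symm

lemma aux_diff_bound (x y : ℤ_[p]) (n : ℕ) (hn : n ≠ 0) :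
    ‖Ring.choose x n - Ring.choose y n‖ ≤ (p:ℝ)^(Nat.log p n : ℤ) * ‖x - y‖ := by
  have hppos : (0:ℝ) < (p:ℝ) := by exact_mod_cast hp.out.pos
  rw [aux_sum_repr]
  refine IsUltrametricDist.norm_sum_le_of_forall_le_of_nonneg
    (by positivity) (fun ij hij => ?_)
  rw [Finset.mem_erase, Finset.HasAntidiagonal.mem_antidiagonal] at hij
  have hij1 : ij.1 ≠ 0 := by
    rintro h0
    exact hij.1 (Prod.ext h0 (by omega))
  have h1 : ‖Ring.choose (x - y) ij.1 * Ring.choose y ij.2‖ ≤ ‖Ring.choose (x-y) ij.1‖ := by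
    rw [norm_mul]
    exact mul_le_of_le_one_right (norm_nonneg _) (PadicInt.norm_le_one _)
  refine h1.trans ((aux_choose_norm_le _ _ hij1).trans ?_)
  refine mul_le_mul_of_nonneg_right ?_ (norm_nonneg _)
  refine zpow_le_zpow_right₀ (by exact_mod_cast hp.out.one_le) ?_
  exact_mod_cast Nat.log_mono_right (by omega)

lemma aux_diff_eq (x y : ℤ_[p]) {k : ℕ} (hk : 0 < k) (hxy : ‖x - y‖ ≤ (p:ℝ)^(-(k:ℤ)))
    (hne : x - y ≠ 0) :
    ‖Ring.choose x (p^k) - Ring.choose y (p^k)‖ = (p:ℝ)^(k:ℕ) * ‖x - y‖ := by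
  have hppos : (0:ℝ) < (p:ℝ) := by exact_mod_cast hp.out.pos
  have hp1 : (1:ℝ) < (p:ℝ) := by exact_mod_cast hp.out.one_lt
  have hpk : p^k ≠ 0 := (pow_pos hp.out.pos k).ne'
  set n := p^k with hn
  rw [aux_sum_repr]
  have hmem : ((n : ℕ), (0:ℕ)) ∈ (antidiagonal n).erase (0, n) := by
    rw [Finset.mem_erase, Finset.HasAntidiagonal.mem_antidiagonal]
    exact ⟨by simp [Prod.ext_iff]; omega, by omega⟩
  rw [← Finset.add_sum_erase _ _ hmem]
  simp only
  have hlead : ‖Ring.choose (x - y) n * Ring.choose y 0‖ = (p:ℝ)^(k:ℕ) * ‖x - y‖ := by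
    rw [Ring.choose_zero_right, mul_one, hn, aux_choose_pk hk hxy]
  have hrest : ‖∑ ij ∈ ((antidiagonal n).erase (0, n)).erase (n, 0),
      Ring.choose (x - y) ij.1 * Ring.choose y ij.2‖ ≤ (p:ℝ)^((k:ℤ)-1) * ‖x - y‖ := by
    refine IsUltrametricDist.norm_sum_le_of_forall_le_of_nonneg (by positivity) (fun ij hij => ?_)
    rw [Finset.mem_erase, Finset.mem_erase, Finset.HasAntidiagonal.mem_antidiagonal] at hij
    have hij1 : ij.1 ≠ 0 := by
      rintro h0
      exact hij.2.1 (Prod.ext h0 (by omega))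
    have hij1n : ij.1 ≠ n := by
      rintro h0
      exact hij.1 (Prod.ext h0 (by omega))
    have hlt : ij.1 < p^k := by
      have : ij.1 ≤ n := by omega
      omega
    have hlog : Nat.log p ij.1 < k := Nat.log_lt_of_lt_pow hij1 hlt
    have h1 : ‖Ring.choose (x - y) ij.1 * Ring.choose y ij.2‖ ≤ ‖Ring.choose (x-y) ij.1‖ := by
      rw [norm_mul]
      exact mul_le_of_le_one_right (norm_nonneg _) (PadicInt.norm_le_one _)
    refine h1.trans ((aux_choose_norm_le _ _ hij1).trans ?_)
    refine mul_le_mul_of_nonneg_right ?_ (norm_nonneg _)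
    refine zpow_le_zpow_right₀ hp1.le (by omega)
  have hlt2 : (p:ℝ)^((k:ℤ)-1) * ‖x - y‖ < (p:ℝ)^(k:ℕ) * ‖x - y‖ := by
    have hxpos : (0:ℝ) < ‖x - y‖ := norm_pos_iff.mpr hne
    have : (p:ℝ)^((k:ℤ)-1) < (p:ℝ)^(k:ℕ) := by
      rw [← zpow_natCast (p:ℝ) k]
      exact zpow_lt_zpow_right₀ hp1 (by omega)
    exact mul_lt_mul_of_pos_right this hxpos
  rw [aux_norm_add_eq (lt_of_le_of_lt hrest (by rw [← hlead] at hlt2; exact hlt2)), hlead]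

end Aux

/-- a map in the Mahler–Bernoulli class, i.e. given by a uniformly
convergent Mahler series `T(x) = Σ Aₙ binom(x,n)` where `p^{⌊log_p n⌋}|Aₙ|` attains its
maximum at a unique `n₀ = p^k` with `k > 0` and `|A_{n₀}| = 1`, is `(p^{-k}, p^k)`
locally scaling. -/
theorem mahlerBernoulliClass_locallyScaling {p : ℕ} [hp : Fact p.Prime]
    (A : ℕ → ℤ_[p]) (hA : Filter.Tendsto (fun n => ‖A n‖) Filter.atTop (nhds 0))
    (T : ℤ_[p] → ℤ_[p]) (hT : ∀ x : ℤ_[p], T x = ∑' n : ℕ, A n * Ring.choose x n)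
    (k n₀ : ℕ) (hk : 0 < k) (hn₀ : n₀ = p ^ k) (hAn₀ : ‖A n₀‖ = 1)
    (hmax : ∀ n : ℕ, n ≠ n₀ →
      (p : ℝ) ^ (Nat.log p n) * ‖A n‖ < (p : ℝ) ^ (Nat.log p n₀) * ‖A n₀‖) :
    ∀ x y : ℤ_[p], ‖x - y‖ ≤ (p : ℝ) ^ (-(k : ℤ)) →
      ‖T x - T y‖ = (p : ℝ) ^ (k : ℕ) * ‖x - y‖ := by
  intro x y hxy
  have hp1 : (1:ℝ) < (p:ℝ) := by exact_mod_cast hp.out.one_lt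
  have hppos : (0:ℝ) < (p:ℝ) := lt_trans one_pos hp1
  rcases eq_or_ne x y with rfl | hne
  · simp
  have hsub : x - y ≠ 0 := sub_ne_zero_of_ne hne
  have hxpos : (0:ℝ) < ‖x - y‖ := norm_pos_iff.mpr hsub
  -- summability
  have hsumm : ∀ z : ℤ_[p], Summable (fun n => A n * Ring.choose z n) := by
    intro z
    apply NonarchimedeanAddGroup.summable_of_tendsto_cofinite_zero
    rw [Nat.cofinite_eq_atTop]
    rw [tendsto_zero_iff_norm_tendsto_zero]
    refine squeeze_zero (fun n => norm_nonneg _) (fun n => ?_) hA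
    rw [norm_mul]
    exact mul_le_of_le_one_right (norm_nonneg _) (PadicInt.norm_le_one _)
  set f : ℕ → ℤ_[p] := fun n => A n * Ring.choose x n - A n * Ring.choose y n with hf
  have hsf : Summable f := (hsumm x).sub (hsumm y)
  have hdiff : T x - T y = ∑' n, f n := by
    rw [hT x, hT y]; exact (Summable.tsum_sub (hsumm x) (hsumm y)).symm
  -- the dominant term
  have hfn₀ : ‖f n₀‖ = (p:ℝ)^(k:ℕ) * ‖x - y‖ := by
    rw [hf]
    simp only [← mul_sub, norm_mul, hAn₀, one_mul]
    rw [hn₀, aux_diff_eq x y hk hxy hsub]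
  -- bound on other terms
  have hterm : ∀ n : ℕ, n ≠ n₀ → ‖f n‖ ≤ (p:ℝ)^((k:ℤ)-1) * ‖x - y‖ := by
    intro n hn
    rcases eq_or_ne n 0 with rfl | hn0
    · simp only [hf, Ring.choose_zero_right, mul_one, sub_self, norm_zero]
      positivity
    have hb := aux_diff_bound x y n hn0
    have hd : (p:ℝ)^(Nat.log p n : ℤ) * ‖A n‖ ≤ (p:ℝ)^((k:ℤ)-1) := by
      have hm := hmax n hn
      rw [hAn₀, mul_one, hn₀, Nat.log_pow hp.out.one_lt] at hm
      rcases eq_or_ne (A n) 0 with h0 | h0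
      · rw [h0, norm_zero, mul_zero]
        positivity
      · rw [PadicInt.norm_eq_zpow_neg_valuation h0] at hm ⊢
        rw [← zpow_natCast (p:ℝ) (Nat.log p n), ← zpow_natCast (p:ℝ) k,
          ← zpow_add₀ hppos.ne'] at hm
        rw [← zpow_add₀ hppos.ne']
        refine zpow_le_zpow_right₀ hp1.le ?_
        have := (zpow_lt_zpow_iff_right₀ hp1).mp hm
        omega
    calc ‖f n‖ = ‖A n‖ * ‖Ring.choose x n - Ring.choose y n‖ := by
          rw [hf]; simp only [← mul_sub, norm_mul]
      _ ≤ ‖A n‖ * ((p:ℝ)^(Nat.log p n : ℤ) * ‖x - y‖) :=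
          mul_le_mul_of_nonneg_left hb (norm_nonneg _)
      _ = ((p:ℝ)^(Nat.log p n : ℤ) * ‖A n‖) * ‖x - y‖ := by ring
      _ ≤ (p:ℝ)^((k:ℤ)-1) * ‖x - y‖ := mul_le_mul_of_nonneg_right hd (norm_nonneg _)
  -- split off the dominant term
  classical
  rw [hdiff, Summable.tsum_eq_add_tsum_ite hsf n₀]
  have hrest : ‖∑' n, ite (n = n₀) 0 (f n)‖ ≤ (p:ℝ)^((k:ℤ)-1) * ‖x - y‖ := by
    refine IsUltrametricDist.norm_tsum_le_of_forall_le_of_nonneg (by positivity) (fun n => ?_)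
    rcases eq_or_ne n n₀ with rfl | hn
    · simp; positivity
    · rw [if_neg hn]; exact hterm n hn
  have hlt : (p:ℝ)^((k:ℤ)-1) * ‖x - y‖ < ‖f n₀‖ := by
    rw [hfn₀]
    refine mul_lt_mul_of_pos_right ?_ hxpos
    rw [← zpow_natCast (p:ℝ) k]
    exact zpow_lt_zpow_right₀ hp1 (by omega)
  rw [aux_norm_add_eq (lt_of_le_of_lt hrest hlt), hfn₀]
end

section
/- Let a ∈ Q_p with |a| = p^k for some k > 0, and define f_a: Z_p → Z_p by f_a(x) = g(ax), where g: Q_p → Z_p truncates the negative-power part of the p-adic expansion. Then f_a is (p^{-k}, p^k) locally scaling: |f_a(x) - f_a(y)| = p^k|x-y| whenever |x-y| ≤ p^{-k}. -/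
/-- for `a ∈ ℚ_p` with `|a| = p^k`, `k > 0`, the map `f_a(x) = g(ax)`
(where `g` truncates the negative-power part of the `p`-adic expansion, i.e.
`x - g(x) = m/p^j` with `0 ≤ m < p^j`) is `(p^{-k}, p^k)` locally scaling. -/
theorem fa_locallyScaling {p : ℕ} [hp : Fact p.Prime]
    (a : ℚ_[p]) (k : ℕ) (hk : 0 < k) (ha : ‖a‖ = (p : ℝ) ^ (k : ℕ))
    (g : ℚ_[p] → ℤ_[p])
    (hg : ∀ x : ℚ_[p], ∃ m j : ℕ, m < p ^ j ∧ x - (g x : ℚ_[p]) = (m : ℚ_[p]) / (p : ℚ_[p]) ^ j) :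
    ∀ x y : ℤ_[p], ‖x - y‖ ≤ (p : ℝ) ^ (-(k : ℤ)) →
      ‖g (a * (x : ℚ_[p])) - g (a * (y : ℚ_[p]))‖ = (p : ℝ) ^ (k : ℕ) * ‖x - y‖ := by
  intro x y hxy
  have hp1 : (1 : ℕ) < p := hp.out.one_lt
  have hp0R : (0 : ℝ) < p := by exact_mod_cast hp.out.pos
  obtain ⟨m1, j1, hm1, h1⟩ := hg (a * (x : ℚ_[p]))
  obtain ⟨m2, j2, hm2, h2⟩ := hg (a * (y : ℚ_[p]))
  set G : ℤ_[p] := g (a * (x : ℚ_[p])) - g (a * (y : ℚ_[p])) with hG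
  -- the key quantity
  have hnormaxy : ‖a * ((x : ℚ_[p]) - (y : ℚ_[p]))‖ ≤ 1 := by
    rw [norm_mul, ha]
    have : ‖(x : ℚ_[p]) - (y : ℚ_[p])‖ ≤ (p : ℝ) ^ (-(k : ℤ)) := by
      rw [← PadicInt.coe_sub, PadicInt.padic_norm_e_of_padicInt]
      exact hxy
    calc (p : ℝ) ^ (k : ℕ) * ‖(x : ℚ_[p]) - (y : ℚ_[p])‖
        ≤ (p : ℝ) ^ (k : ℕ) * (p : ℝ) ^ (-(k : ℤ)) := by
          exact mul_le_mul_of_nonneg_left this (by positivity)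
      _ = 1 := by
          rw [← zpow_natCast (p : ℝ) k, ← zpow_add₀ (ne_of_gt hp0R)]
          simp
  -- d = difference of fractional parts
  have hd : (m1 : ℚ_[p]) / (p : ℚ_[p]) ^ j1 - (m2 : ℚ_[p]) / (p : ℚ_[p]) ^ j2
      = a * ((x : ℚ_[p]) - (y : ℚ_[p])) - (G : ℚ_[p]) := by
    rw [← h1, ← h2]
    push_cast [hG]
    ring
  have hdnorm : ‖(m1 : ℚ_[p]) / (p : ℚ_[p]) ^ j1 - (m2 : ℚ_[p]) / (p : ℚ_[p]) ^ j2‖ ≤ 1 := by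
    rw [hd]
    have hGle : ‖(G : ℚ_[p])‖ ≤ 1 := by
      rw [PadicInt.padic_norm_e_of_padicInt]; exact PadicInt.norm_le_one G
    calc ‖a * ((x : ℚ_[p]) - (y : ℚ_[p])) - (G : ℚ_[p])‖
        ≤ max ‖a * ((x : ℚ_[p]) - (y : ℚ_[p]))‖ ‖(G : ℚ_[p])‖ := by
          simpa [sub_eq_add_neg] using
            Padic.nonarchimedean (a * ((x : ℚ_[p]) - (y : ℚ_[p]))) (-(G : ℚ_[p]))
      _ ≤ 1 := max_le hnormaxy hGle
  -- clear denominators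
  have hpj1 : ((p : ℚ_[p]) ^ j1) ≠ 0 := by
    exact pow_ne_zero _ (Nat.cast_ne_zero.mpr hp.out.pos.ne')
  have hpj2 : ((p : ℚ_[p]) ^ j2) ≠ 0 := by
    exact pow_ne_zero _ (Nat.cast_ne_zero.mpr hp.out.pos.ne')
  set N : ℤ := (m1 : ℤ) * (p : ℤ) ^ j2 - (m2 : ℤ) * (p : ℤ) ^ j1 with hN
  have hNcast : (N : ℚ_[p]) =
      ((m1 : ℚ_[p]) / (p : ℚ_[p]) ^ j1 - (m2 : ℚ_[p]) / (p : ℚ_[p]) ^ j2)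
        * (p : ℚ_[p]) ^ (j1 + j2) := by
    push_cast [hN]
    field_simp
    ring
  have hNnorm : ‖(N : ℚ_[p])‖ ≤ (p : ℝ) ^ (-(j1 + j2 : ℕ) : ℤ) := by
    rw [hNcast, norm_mul]
    have : ‖(p : ℚ_[p]) ^ (j1 + j2)‖ = (p : ℝ) ^ (-(j1 + j2 : ℕ) : ℤ) := by
      rw [norm_pow, Padic.norm_p, inv_pow, ← zpow_natCast (p : ℝ), ← zpow_neg]
    rw [this]
    nth_rewrite 2 [← one_mul ((p : ℝ) ^ (-(j1 + j2 : ℕ) : ℤ))]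
    exact mul_le_mul_of_nonneg_right hdnorm (by positivity)
  have hNdvd : ((p : ℤ) ^ (j1 + j2)) ∣ N := (Padic.norm_int_le_pow_iff_dvd N (j1 + j2)).1 hNnorm
  have hNabs : |N| < (p : ℤ) ^ (j1 + j2) := by
    rw [abs_sub_lt_iff]
    constructor
    · have h1' : (m1 : ℤ) * (p : ℤ) ^ j2 < (p : ℤ) ^ j1 * (p : ℤ) ^ j2 := by
        have : (m1 : ℤ) < (p : ℤ) ^ j1 := by exact_mod_cast hm1
        exact mul_lt_mul_of_pos_right this (by positivity)
      have h2' : (0 : ℤ) ≤ (m2 : ℤ) * (p : ℤ) ^ j1 := by positivity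
      rw [pow_add]; linarith
    · have h1' : (m2 : ℤ) * (p : ℤ) ^ j1 < (p : ℤ) ^ j2 * (p : ℤ) ^ j1 := by
        have : (m2 : ℤ) < (p : ℤ) ^ j2 := by exact_mod_cast hm2
        exact mul_lt_mul_of_pos_right this (by positivity)
      have h2' : (0 : ℤ) ≤ (m1 : ℤ) * (p : ℤ) ^ j2 := by positivity
      rw [pow_add, mul_comm ((p:ℤ)^j1)]; linarith
  have hN0 : N = 0 := Int.eq_zero_of_abs_lt_dvd hNdvd hNabs
  have hd0 : (m1 : ℚ_[p]) / (p : ℚ_[p]) ^ j1 - (m2 : ℚ_[p]) / (p : ℚ_[p]) ^ j2 = 0 := by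
    have : (N : ℚ_[p]) = 0 := by exact_mod_cast congrArg (Int.cast : ℤ → ℚ_[p]) hN0
    rw [hNcast] at this
    exact (mul_eq_zero.1 this).resolve_right (pow_ne_zero _ (Nat.cast_ne_zero.mpr hp.out.pos.ne'))
  have hGeq : (G : ℚ_[p]) = a * ((x : ℚ_[p]) - (y : ℚ_[p])) := by
    have h := hd0.symm.trans hd
    exact (sub_eq_zero.mp h.symm).symm
  have : ‖G‖ = ‖(G : ℚ_[p])‖ := (PadicInt.padic_norm_e_of_padicInt G).symm
  rw [hG] at this ⊢
  rw [this, hGeq, norm_mul, ha, ← PadicInt.coe_sub, PadicInt.padic_norm_e_of_padicInt]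
end
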